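/- Let ψ, ψ̃ be twice differentiable, increasing, nonvanishing functions on (0,∞) with strictly positive derivatives, satisfying −ψ''(ζ)/ψ'(ζ) ≤ −ψ̃''(ζ)/ψ̃'(ζ) for all ζ > 0. Define ψ_λ(ξ) = (1 − ξ/λ²)/(1 − ψ(ξ)/ψ(λ²)) for ξ ≠ λ², extended continuously by ψ_λ(λ²) = ψ(λ²)/(λ² ψ'(λ²)), and similarly ψ̃_λ. Then for 0 < λ < ξ: ψ_λ(ξ²)/ψ_λ(λ²) ≤ ψ̃_λ(ξ²)/ψ̃_λ(λ²), and for 0 < ξ < λ the reversed inequality holds. -/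

import Mathlib

open Real

/-- The ratio `ψ_λ(ξ²)/ψ_λ(λ²) = ψ'(λ²)(λ² − ξ²)/(ψ(λ²) − ψ(ξ²))`. -/
noncomputable def psiLamRatio (ψ : ℝ → ℝ) (lam ξ : ℝ) : ℝ :=
  deriv ψ (lam^2) * (lam^2 - ξ^2) / (ψ (lam^2) - ψ (ξ^2))

/-- The ratio of derivatives `ψ'/ψt'` is nondecreasing on `(0,∞)`. -/
lemma ratio_mono (ψ ψt : ℝ → ℝ)
    (hψd : ∀ ζ > (0:ℝ), DifferentiableAt ℝ ψ ζ ∧ DifferentiableAt ℝ (deriv ψ) ζ)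
    (hψtd : ∀ ζ > (0:ℝ), DifferentiableAt ℝ ψt ζ ∧ DifferentiableAt ℝ (deriv ψt) ζ)
    (hψ' : ∀ ζ > (0:ℝ), 0 < deriv ψ ζ)
    (hψt' : ∀ ζ > (0:ℝ), 0 < deriv ψt ζ)
    (h : ∀ ζ > (0:ℝ), -(deriv (deriv ψ) ζ) / deriv ψ ζ ≤
        -(deriv (deriv ψt) ζ) / deriv ψt ζ) :
    MonotoneOn (fun ζ => deriv ψ ζ / deriv ψt ζ) (Set.Ioi (0:ℝ)) := by
  have hint : interior (Set.Ioi (0:ℝ)) = Set.Ioi 0 := interior_Ioi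
  have hdiff : DifferentiableOn ℝ (fun ζ => deriv ψ ζ / deriv ψt ζ) (Set.Ioi (0:ℝ)) := by
    intro x hx
    exact (((hψd x hx).2.div (hψtd x hx).2 (ne_of_gt (hψt' x hx)))).differentiableWithinAt
  apply monotoneOn_of_deriv_nonneg (convex_Ioi 0) hdiff.continuousOn
  · rw [hint]; exact hdiff
  · intro x hx
    rw [hint] at hx
    have hx0 : (0:ℝ) < x := hx
    have hψ'x := hψ' x hx0
    have hψt'x := hψt' x hx0
    have hd : deriv (fun ζ => deriv ψ ζ / deriv ψt ζ) x =
        (deriv (deriv ψ) x * deriv ψt x - deriv ψ x * deriv (deriv ψt) x)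
          / (deriv ψt x)^2 := by
      exact ((hψd x hx0).2.hasDerivAt.div (hψtd x hx0).2.hasDerivAt (ne_of_gt hψt'x)).deriv
    rw [hd]
    apply div_nonneg _ (sq_nonneg _)
    have hh := h x hx0
    rw [div_le_div_iff₀ hψ'x hψt'x] at hh
    nlinarith
  
/-- Core product inequality for `0 < x ≤ y`: `ψ'(x)ψt'(y) ≤ ψ'(y)ψt'(x)`. -/
lemma key_prod (ψ ψt : ℝ → ℝ)
    (hψd : ∀ ζ > (0:ℝ), DifferentiableAt ℝ ψ ζ ∧ DifferentiableAt ℝ (deriv ψ) ζ)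
    (hψtd : ∀ ζ > (0:ℝ), DifferentiableAt ℝ ψt ζ ∧ DifferentiableAt ℝ (deriv ψt) ζ)
    (hψ' : ∀ ζ > (0:ℝ), 0 < deriv ψ ζ)
    (hψt' : ∀ ζ > (0:ℝ), 0 < deriv ψt ζ)
    (h : ∀ ζ > (0:ℝ), -(deriv (deriv ψ) ζ) / deriv ψ ζ ≤
        -(deriv (deriv ψt) ζ) / deriv ψt ζ)
    {x y : ℝ} (hx : 0 < x) (hxy : x ≤ y) :
    deriv ψ x * deriv ψt y ≤ deriv ψ y * deriv ψt x := by
  have hy : 0 < y := lt_of_lt_of_le hx hxy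
  have := ratio_mono ψ ψt hψd hψtd hψ' hψt' h hx hy hxy
  simp only at this
  rw [div_le_div_iff₀ (hψt' x hx) (hψt' y hy)] at this
  linarith

/-- FTC: `ψ y − ψ x = ∫ u in x..y, ψ'(u)` for `0 < x ≤ y`. -/
lemma ftc (ψ : ℝ → ℝ)
    (hψd : ∀ ζ > (0:ℝ), DifferentiableAt ℝ ψ ζ ∧ DifferentiableAt ℝ (deriv ψ) ζ)
    {x y : ℝ} (hx : 0 < x) (hxy : x ≤ y) :
    ψ y - ψ x = ∫ u in x..y, deriv ψ u := by
  have hsub : Set.uIcc x y ⊆ Set.Ioi (0:ℝ) := by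
    rw [Set.uIcc_of_le hxy]
    intro u hu
    exact lt_of_lt_of_le hx hu.1
  have hcont : ContinuousOn (deriv ψ) (Set.uIcc x y) := fun u hu =>
    ((hψd u (hsub hu)).2.continuousAt).continuousWithinAt
  rw [intervalIntegral.integral_eq_sub_of_hasDerivAt
    (fun u hu => (hψd u (hsub hu)).1.hasDerivAt) (hcont.intervalIntegrable)]

lemma contDeriv (ψ : ℝ → ℝ)
    (hψd : ∀ ζ > (0:ℝ), DifferentiableAt ℝ ψ ζ ∧ DifferentiableAt ℝ (deriv ψ) ζ)
    {x y : ℝ} (hx : 0 < x) (hxy : x ≤ y) :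
    ContinuousOn (deriv ψ) (Set.uIcc x y) := by
  intro u hu
  rw [Set.uIcc_of_le hxy] at hu
  exact ((hψd u (lt_of_lt_of_le hx hu.1)).2.continuousAt).continuousWithinAt

theorem stmt11 (ψ ψt : ℝ → ℝ)
    (hψd : ∀ ζ > (0:ℝ), DifferentiableAt ℝ ψ ζ ∧ DifferentiableAt ℝ (deriv ψ) ζ)
    (hψtd : ∀ ζ > (0:ℝ), DifferentiableAt ℝ ψt ζ ∧ DifferentiableAt ℝ (deriv ψt) ζ)
    (hψ' : ∀ ζ > (0:ℝ), 0 < deriv ψ ζ)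
    (hψt' : ∀ ζ > (0:ℝ), 0 < deriv ψt ζ)
    (hψmono : StrictMonoOn ψ (Set.Ioi 0))
    (hψtmono : StrictMonoOn ψt (Set.Ioi 0))
    (hψne : ∀ ζ > (0:ℝ), ψ ζ ≠ 0)
    (hψtne : ∀ ζ > (0:ℝ), ψt ζ ≠ 0)
    (h : ∀ ζ > (0:ℝ), -(deriv (deriv ψ) ζ) / deriv ψ ζ ≤
        -(deriv (deriv ψt) ζ) / deriv ψt ζ) :
    (∀ lam ξ : ℝ, 0 < lam → lam < ξ →
        psiLamRatio ψ lam ξ ≤ psiLamRatio ψt lam ξ) ∧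
    (∀ lam ξ : ℝ, 0 < ξ → ξ < lam →
        psiLamRatio ψt lam ξ ≤ psiLamRatio ψ lam ξ) := by
  constructor
  · -- case 0 < lam < ξ : integrate from a = lam² to b = ξ²
    intro lam ξ hlam hlx
    set a := lam^2 with ha
    set b := ξ^2 with hb
    have ha0 : 0 < a := by positivity
    have hab : a < b := by nlinarith
    have hb0 : 0 < b := lt_trans ha0 hab
    -- key: ψ'(a)(ψt b − ψt a) ≤ ψt'(a)(ψ b − ψ a)
    have hkey : deriv ψ a * (ψt b - ψt a) ≤ deriv ψt a * (ψ b - ψ a) := by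
      rw [ftc ψ hψd ha0 hab.le, ftc ψt hψtd ha0 hab.le,
        ← intervalIntegral.integral_const_mul, ← intervalIntegral.integral_const_mul]
      apply intervalIntegral.integral_mono_on hab.le
      · exact ((contDeriv ψt hψtd ha0 hab.le).const_smul
          (deriv ψ a)).intervalIntegrable
      · exact ((contDeriv ψ hψd ha0 hab.le).const_smul
          (deriv ψt a)).intervalIntegrable
      · intro u hu
        have hu0 : 0 < u := lt_of_lt_of_le ha0 hu.1
        have := key_prod ψ ψt hψd hψtd hψ' hψt' h ha0 hu.1
        nlinarith
    have hden : ψ a - ψ b < 0 := sub_neg.2 (hψmono ha0 hb0 hab)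
    have hdent : ψt a - ψt b < 0 := sub_neg.2 (hψtmono ha0 hb0 hab)
    have e1 : psiLamRatio ψ lam ξ = deriv ψ a * (b - a) / (ψ b - ψ a) := by
      unfold psiLamRatio
      rw [← ha, ← hb, show deriv ψ a * (a - b) = -(deriv ψ a * (b - a)) by ring,
        show ψ a - ψ b = -(ψ b - ψ a) by ring, neg_div_neg_eq]
    have e2 : psiLamRatio ψt lam ξ = deriv ψt a * (b - a) / (ψt b - ψt a) := by
      unfold psiLamRatio
      rw [← ha, ← hb, show deriv ψt a * (a - b) = -(deriv ψt a * (b - a)) by ring,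
        show ψt a - ψt b = -(ψt b - ψt a) by ring, neg_div_neg_eq]
    rw [e1, e2, div_le_div_iff₀ (by linarith) (by linarith)]
    nlinarith [sub_pos.2 hab]
  · -- case 0 < ξ < lam : integrate from b = ξ² to a = lam²
    intro lam ξ hξ hxl
    set a := lam^2 with ha
    set b := ξ^2 with hb
    have hb0 : 0 < b := by positivity
    have hba : b < a := by nlinarith
    have ha0 : 0 < a := lt_trans hb0 hba
    have hkey : deriv ψt a * (ψ a - ψ b) ≤ deriv ψ a * (ψt a - ψt b) := by
      rw [ftc ψ hψd hb0 hba.le, ftc ψt hψtd hb0 hba.le,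
        ← intervalIntegral.integral_const_mul, ← intervalIntegral.integral_const_mul]
      apply intervalIntegral.integral_mono_on hba.le
      · exact ((contDeriv ψ hψd hb0 hba.le).const_smul
          (deriv ψt a)).intervalIntegrable
      · exact ((contDeriv ψt hψtd hb0 hba.le).const_smul
          (deriv ψ a)).intervalIntegrable
      · intro u hu
        have hu0 : 0 < u := lt_of_lt_of_le hb0 hu.1
        have := key_prod ψ ψt hψd hψtd hψ' hψt' h hu0 hu.2
        nlinarith
    have hden : 0 < ψ a - ψ b := sub_pos.2 (hψmono hb0 ha0 hba)
    have hdent : 0 < ψt a - ψt b := sub_pos.2 (hψtmono hb0 ha0 hba)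
    unfold psiLamRatio
    rw [← ha, ← hb, div_le_div_iff₀ hdent hden]
    nlinarith [sub_pos.2 hba]
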